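/- For all real numbers $y > x > 1$, the Gamma function satisfies $\Gamma(x)/\Gamma(y) \leq (x^{x-1}/y^{y-1}) e^{y-x}$. -/

import Mathlib

open Real Set

private lemma Gne {t : ℝ} (ht : 0 < t) : Real.Gamma t ≠ 0 :=
  (Real.Gamma_pos_of_pos ht).ne'

private lemma hnm {t : ℝ} (ht : 0 < t) : ∀ m : ℕ, t ≠ -m :=
  fun m => ((neg_nonpos.mpr (Nat.cast_nonneg m)).trans_lt ht).ne'

private lemma fdiff {t : ℝ} (ht : 0 < t) :
    DifferentiableAt ℝ (fun s => Real.log (Real.Gamma s)) t :=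
  (Real.differentiableAt_Gamma (hnm ht)).log (Gne ht)

private lemma psi_lower {t : ℝ} (ht : 0 < t) :
    Real.log t - 1 / t ≤ deriv (fun s => Real.log (Real.Gamma s)) t := by
  set f : ℝ → ℝ := fun s => Real.log (Real.Gamma s) with hf
  have hslope : slope f t (t + 1) ≤ deriv f (t + 1) :=
    Real.convexOn_log_Gamma.slope_le_deriv (mem_Ioi.mpr ht)
      (mem_Ioi.mpr (by linarith)) (by linarith) (fdiff (by linarith))
  have hslope_eq : slope f t (t + 1) = Real.log t := by
    have h1 : f (t + 1) = Real.log t + f t := by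
      simp only [hf]
      rw [Real.Gamma_add_one ht.ne', Real.log_mul ht.ne' (Gne ht)]
    rw [slope_def_field, h1]
    field_simp
    ring
  have hshift : deriv f (t + 1) = deriv f t + 1 / t := by
    have hev : (fun s => f (s + 1)) =ᶠ[nhds t] fun s => Real.log s + f s := by
      filter_upwards [eventually_gt_nhds ht] with s hs
      simp only [hf]
      rw [Real.Gamma_add_one hs.ne', Real.log_mul hs.ne' (Gne hs)]
    have h2 : deriv (fun s => f (s + 1)) t = deriv f (t + 1) := by
      simpa using deriv_comp_add_const f 1 t
    have h3 : deriv (fun s => Real.log s + f s) t = 1 / t + deriv f t := by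
      rw [deriv_fun_add (Real.differentiableAt_log ht.ne') (fdiff ht), Real.deriv_log]
      ring_nf
      rfl
    rw [← h2, hev.deriv_eq, h3]; ring
  rw [hslope_eq, hshift] at hslope
  linarith

theorem stmt_1 (x y : ℝ) (hx : 1 < x) (hxy : x < y) :
    Real.Gamma x / Real.Gamma y ≤ x ^ (x - 1) / y ^ (y - 1) * Real.exp (y - x) := by
  set f : ℝ → ℝ := fun s => Real.log (Real.Gamma s) with hf
  set H : ℝ → ℝ := fun t => f t - ((t - 1) * Real.log t - t) with hH
  have hHdiff : ∀ t : ℝ, 0 < t → DifferentiableAt ℝ H t := by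
    intro t ht0
    exact (fdiff ht0).sub (((differentiableAt_id.sub_const 1).mul
      (Real.differentiableAt_log ht0.ne')).sub differentiableAt_id)
  have hmono : H x ≤ H y := by
    have hc : ContinuousOn H (Icc x y) := fun t ht =>
      ((hHdiff t (by linarith [ht.1])).continuousAt).continuousWithinAt
    have hd : ∀ t ∈ interior (Icc x y), 0 ≤ deriv H t := by
      intro t ht
      rw [interior_Icc] at ht
      have ht0 : (0:ℝ) < t := by linarith [ht.1]
      have hg : HasDerivAt (fun t => (t - 1) * Real.log t - t)
          (Real.log t + (t - 1) * (1 / t) - 1) t := by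
        have h := (((hasDerivAt_id t).sub_const 1).mul
          (Real.hasDerivAt_log ht0.ne')).sub (hasDerivAt_id t)
        exact h.congr_deriv (by simp)
      have hHd : deriv H t = deriv f t - (Real.log t + (t - 1) * (1 / t) - 1) := by
        rw [hH, deriv_fun_sub (fdiff ht0) hg.differentiableAt, hg.deriv]
      rw [hHd]
      have hp := psi_lower ht0
      have h1t : Real.log t + (t - 1) * (1 / t) - 1 = Real.log t - 1 / t := by
        field_simp
        ring
      rw [h1t]
      simp only [hf] at hp ⊢
      linarith
    exact monotoneOn_of_deriv_nonneg (convex_Icc x y) hc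
      (fun t ht => (hHdiff t (by rw [interior_Icc] at ht; linarith [ht.1])).differentiableWithinAt)
      hd (left_mem_Icc.mpr hxy.le) (right_mem_Icc.mpr hxy.le) hxy.le
  have hx0 : (0:ℝ) < x := by linarith
  have hy0 : (0:ℝ) < y := by linarith
  have hΓx : 0 < Real.Gamma x := Real.Gamma_pos_of_pos hx0
  have hΓy : 0 < Real.Gamma y := Real.Gamma_pos_of_pos hy0
  have key : f x - f y ≤ ((x - 1) * Real.log x - x) - ((y - 1) * Real.log y - y) := by
    simp only [hH] at hmono; linarith
  have lhs_eq : Real.Gamma x / Real.Gamma y = Real.exp (f x - f y) := by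
    rw [Real.exp_sub, hf, Real.exp_log hΓx, Real.exp_log hΓy]
  have rhs_eq : x ^ (x - 1) / y ^ (y - 1) * Real.exp (y - x)
      = Real.exp (((x - 1) * Real.log x - x) - ((y - 1) * Real.log y - y)) := by
    rw [Real.rpow_def_of_pos hx0, Real.rpow_def_of_pos hy0, ← Real.exp_sub, ← Real.exp_add]
    ring_nf
  rw [lhs_eq, rhs_eq]
  exact Real.exp_le_exp.mpr key
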